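/- Let a, b ∈ [0,1) with a > 0 or b > 0, and let N be the norm on ℝ² defined by N(c,d) = max{ |c|, |d|, ((1−b)|c| + (1−a)|d|)/(1−ab) }. Then there is a λ ∈ (0,1) such that N(2λ + (1−λ)a, 2(1−λ) + λb) < 1 + N(λ, 1−λ). -/
import Mathlib


noncomputable section

/-- For `a, b ∈ [0,1)`, the generic absolute normalized norm with the positive strong
diameter 2 property: `N(c,d) = max{|c|, |d|, ((1-b)|c| + (1-a)|d|)/(1-ab)}`. -/
def genNorm (a b : ℝ) (u : ℝ × ℝ) : ℝ :=
  max (max |u.1| |u.2|) (((1 - b) * |u.1| + (1 - a) * |u.2|) / (1 - a * b))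

/-- Lemma 3.10: there is `λ ∈ (0,1)` with
`N(2λ + (1-λ)a, 2(1-λ) + λb) < 1 + N(λ, 1-λ)`. -/
lemma genNorm_key (a b l : ℝ) (hab : 0 < 1 - a * b)
    (hl0 : 0 < l) (hl1 : l < 1)
    (hc : 0 ≤ 2 * l + (1 - l) * a) (hd : 0 ≤ 2 * (1 - l) + l * b)
    (h3 : (1 - b) * l + (1 - a) * (1 - l) < (max l (1 - l)) * (1 - a * b))
    (hc' : 2 * l + (1 - l) * a < 1 + max l (1 - l))
    (hd' : 2 * (1 - l) + l * b < 1 + max l (1 - l)) :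
    genNorm a b (2 * l + (1 - l) * a, 2 * (1 - l) + l * b) <
      1 + genNorm a b (l, 1 - l) := by
  have hm : genNorm a b (l, 1 - l) = max l (1 - l) := by
    unfold genNorm
    simp only [abs_of_pos hl0, abs_of_pos (by linarith : (0:ℝ) < 1 - l)]
    rw [max_eq_left]
    exact le_of_lt ((div_lt_iff₀ hab).mpr h3)
  rw [hm]
  unfold genNorm
  simp only [abs_of_nonneg hc, abs_of_nonneg hd]
  rw [max_lt_iff, max_lt_iff]
  refine ⟨⟨hc', hd'⟩, ?_⟩
  rw [div_lt_iff₀ hab]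
  nlinarith [h3]

theorem exists_lambda_genNorm (a b : ℝ) (ha0 : 0 ≤ a) (ha1 : a < 1)
    (hb0 : 0 ≤ b) (hb1 : b < 1) (hab : 0 < a ∨ 0 < b) :
    ∃ l : ℝ, 0 < l ∧ l < 1 ∧
      genNorm a b (2 * l + (1 - l) * a, 2 * (1 - l) + l * b) <
        1 + genNorm a b (l, 1 - l) := by
  have hab1 : 0 < 1 - a * b := by nlinarith
  rcases hab with ha | hb
  · -- take l = a / (2*(1+a)), small; max = 1 - l
    set l := a / (2 * (1 + a)) with hldef
    have h2a : 0 < 2 * (1 + a) := by linarith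
    have hl0 : 0 < l := div_pos ha h2a
    have hleq : l * (2 * (1 + a)) = a := div_mul_cancel₀ a (by positivity)
    have hll : l < 1 / 4 := by
      rw [hldef, div_lt_iff₀ h2a]; nlinarith
    have hl1 : l < 1 := by linarith
    have hmax : max l (1 - l) = 1 - l := max_eq_right (by linarith)
    refine ⟨l, hl0, hl1, genNorm_key a b l hab1 hl0 hl1 (by nlinarith) (by nlinarith) ?_ ?_ ?_⟩
    · rw [hmax]; nlinarith [hleq, mul_pos ha (show (0:ℝ) < 1 - b by linarith)]
    · rw [hmax]; nlinarith
    · rw [hmax]; nlinarith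
  · -- take l = 1 - b / (2*(1+b)); max = l
    set m := b / (2 * (1 + b)) with hmdef
    have h2b : 0 < 2 * (1 + b) := by linarith
    have hm0 : 0 < m := div_pos hb h2b
    have hmeq : m * (2 * (1 + b)) = b := div_mul_cancel₀ b (by positivity)
    have hmm : m < 1 / 4 := by
      rw [hmdef, div_lt_iff₀ h2b]; nlinarith
    set l := 1 - m with hldef
    have hl0 : 0 < l := by simp [hldef]; linarith
    have hl1 : l < 1 := by simp [hldef]; linarith
    have hmax : max l (1 - l) = l := max_eq_left (by simp [hldef]; linarith)
    refine ⟨l, hl0, hl1, genNorm_key a b l hab1 hl0 hl1 (by nlinarith) (by nlinarith) ?_ ?_ ?_⟩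
    · rw [hmax]; simp only [hldef]; nlinarith
    · rw [hmax]; simp only [hldef]; nlinarith
    · rw [hmax]; simp only [hldef]; nlinarith
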